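/- Let X_1, ..., X_e be i.i.d. uniform on [0,1], δ_n ∈ [0,1], |w_n| ≥ α > 0, and λ > 0. Then p := P(Σ_{n=1}^e |w_n (X_n - δ_n)| < λ) satisfies p ≤ (2λ)^e / (α^e · e!). -/

import Mathlib

open MeasureTheory

/-- the probability that a uniform random clean input activates the
backdoor switch is at most (2λ)^e / (α^e e!). -/
theorem stmt7 {Ω : Type*} [MeasurableSpace Ω] (μ : Measure Ω) [IsProbabilityMeasure μ]
    (e : ℕ) (X : Fin e → Ω → ℝ) (δ w : Fin e → ℝ) (α lam : ℝ)
    (hα : 0 < α) (hlam : 0 < lam)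
    (hmeas : ∀ n, Measurable (X n))
    (hunif : ∀ n, Measure.map (X n) μ = (volume.restrict (Set.Icc (0:ℝ) 1)))
    (hindep : ProbabilityTheory.iIndepFun X μ)
    (hδ : ∀ n, δ n ∈ Set.Icc (0:ℝ) 1)
    (hw : ∀ n, α ≤ |w n|) :
    μ {ω | ∑ n, |w n * (X n ω - δ n)| < lam} ≤
      ENNReal.ofReal ((2 * lam) ^ e / (α ^ e * Nat.factorial e)) := by
  rcases Nat.eq_zero_or_pos e with he | he
  · subst he
    simp only [Finset.univ_eq_empty, Finset.sum_empty, hlam, Set.setOf_true, measure_univ,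
      pow_zero, Nat.factorial_zero, Nat.cast_one, mul_one, div_one, ENNReal.ofReal_one, le_refl]
  have : Nonempty (Fin e) := ⟨⟨0, he⟩⟩
  set r : ℝ := lam / α with hr
  have hrpos : 0 < r := div_pos hlam hα
  set T : Ω → (Fin e → ℝ) := fun ω n => X n ω with hT
  have hTm : Measurable T := measurable_pi_lambda _ hmeas
  -- the law of T is the product of uniform measures
  have hmap : Measure.map T μ = Measure.pi (fun _ : Fin e => volume.restrict (Set.Icc (0:ℝ) 1)) := by
    refine (Measure.pi_eq fun s hs => ?_).symm
    rw [Measure.map_apply hTm (MeasurableSet.univ_pi hs)]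
    have hpre : T ⁻¹' Set.pi Set.univ s = ⋂ n, X n ⁻¹' s n := by
      ext ω; simp [Set.mem_pi, hT]
    rw [hpre, hindep.meas_iInter fun i => ⟨s i, hs i, rfl⟩]
    refine Finset.prod_congr rfl fun i _ => ?_
    rw [← Measure.map_apply (hmeas i) (hs i), hunif i]
  -- product of restricted measures is the restriction of pi volume
  have hrestr : Measure.pi (fun _ : Fin e => volume.restrict (Set.Icc (0:ℝ) 1))
      = (volume : Measure (Fin e → ℝ)).restrict (Set.pi Set.univ fun _ => Set.Icc (0:ℝ) 1) := by
    refine Measure.pi_eq fun s hs => ?_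
    rw [Measure.restrict_apply (MeasurableSet.univ_pi hs), ← Set.pi_inter_distrib,
      volume_pi, Measure.pi_pi]
    exact Finset.prod_congr rfl fun i _ => (Measure.restrict_apply (hs i)).symm
  -- the target set in the product space
  set B : Set (Fin e → ℝ) := {x | ∑ n, |x n - δ n| < r} with hB
  have hBmeas : MeasurableSet B := by
    apply measurableSet_lt _ measurable_const
    exact Finset.measurable_sum _ fun i _ => ((measurable_pi_apply i).sub_const _).abs
  -- inclusion of events
  have hsub : {ω | ∑ n, |w n * (X n ω - δ n)| < lam} ⊆ T ⁻¹' B := by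
    intro ω hω
    simp only [Set.mem_setOf_eq] at hω ⊢
    have key : α * ∑ n, |X n ω - δ n| ≤ ∑ n, |w n * (X n ω - δ n)| := by
      rw [Finset.mul_sum]
      refine Finset.sum_le_sum fun i _ => ?_
      rw [abs_mul]
      exact mul_le_mul_of_nonneg_right (hw i) (abs_nonneg _)
    have : α * ∑ n, |X n ω - δ n| < lam := lt_of_le_of_lt key hω
    simpa [hB, hr, lt_div_iff₀' hα] using this
  calc μ {ω | ∑ n, |w n * (X n ω - δ n)| < lam}
      ≤ μ (T ⁻¹' B) := measure_mono hsub
    _ = (Measure.map T μ) B := (Measure.map_apply hTm hBmeas).symm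
    _ ≤ (volume : Measure (Fin e → ℝ)) B := by
        rw [hmap, hrestr]; exact Measure.restrict_apply_le _ B
    _ = (volume : Measure (Fin e → ℝ)) {x | ∑ n, |x n| < r} := by
        have : B = (fun x : Fin e → ℝ => x + (-δ)) ⁻¹' {x | ∑ n, |x n| < r} := by
          ext x; simp [hB, sub_eq_add_neg]
        rw [this, measure_preimage_add_right]
    _ ≤ ENNReal.ofReal ((2 * lam) ^ e / (α ^ e * Nat.factorial e)) := by
        have h1 : {x : Fin e → ℝ | ∑ n, |x n| < r}
            = {x : Fin e → ℝ | (∑ n, |x n| ^ (1:ℝ)) ^ (1/(1:ℝ)) < r} := by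
          simp [Real.rpow_one]
        rw [h1, MeasureTheory.volume_sum_rpow_lt (Fin e) le_rfl r]
        have hg2 : Real.Gamma (1/(1:ℝ) + 1) = 1 := by
          norm_num [Real.Gamma_two]
        have hg3 : Real.Gamma ((Fintype.card (Fin e)) / (1:ℝ) + 1) = (Nat.factorial e : ℝ) := by
          rw [Fintype.card_fin, div_one]
          exact_mod_cast Real.Gamma_nat_eq_factorial e
        rw [hg2, hg3, Fintype.card_fin, ← ENNReal.ofReal_pow hrpos.le, ← ENNReal.ofReal_mul
          (by positivity)]
        apply ENNReal.ofReal_le_ofReal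
        apply le_of_eq
        rw [hr]
        have hfac : (0:ℝ) < Nat.factorial e := by positivity
        field_simp
        rw [div_pow, mul_pow, mul_right_comm, div_mul_cancel₀ _ (pow_ne_zero e hα.ne')]
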